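/- Define x_0 = 1 and x_{n+1} = x_n^2 / (x_n + 1) in the rationals, and let E_n be the Euclid numbers (E_0 = 2, E_{n+1} = E_n^2 - E_n + 1). Then x_n = 1 / (E_n - 1) and x_{n+1} - x_n = -1 / E_n for every n ≥ 0. -/

import Mathlib

/-- The n-th Euclid number. -/
def euclidNum : ℕ → ℤ
  | 0 => 2
  | n + 1 => (euclidNum n) ^ 2 - euclidNum n + 1

lemma euclid_ge_two : ∀ n, 2 ≤ euclidNum n
  | 0 => le_refl 2
  | n + 1 => by
    have h := euclid_ge_two n
    show 2 ≤ (euclidNum n) ^ 2 - euclidNum n + 1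
    nlinarith

theorem seq_euclid (x : ℕ → ℚ) (hx0 : x 0 = 1)
    (hrec : ∀ n, x (n + 1) = (x n) ^ 2 / (x n + 1)) :
    ∀ n, x n = 1 / ((euclidNum n : ℚ) - 1) ∧
      x (n + 1) - x n = -1 / (euclidNum n : ℚ) := by
  have hQ : ∀ n, (2 : ℚ) ≤ (euclidNum n : ℚ) := fun n => by
    exact_mod_cast euclid_ge_two n
  have key : ∀ n, x n = 1 / ((euclidNum n : ℚ) - 1) := by
    intro n
    induction n with
    | zero => rw [hx0]; norm_num [euclidNum]
    | succ k ih =>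
      have he := hQ k
      have h1 : (euclidNum k : ℚ) - 1 ≠ 0 := by linarith
      have h2 : (euclidNum k : ℚ) ≠ 0 := by linarith
      have h3 : (euclidNum k : ℚ) ^ 2 - (euclidNum k : ℚ) ≠ 0 := by nlinarith
      rw [hrec k, ih]
      have : ((euclidNum (k + 1) : ℤ) : ℚ) = (euclidNum k : ℚ) ^ 2 - (euclidNum k : ℚ) + 1 := by
        push_cast [euclidNum]; ring
      rw [this]
      field_simp [h3]
      ring_nf
      field_simp
  intro n
  refine ⟨key n, ?_⟩
  have he := hQ n
  have h1 : (euclidNum n : ℚ) - 1 ≠ 0 := by linarith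
  have h2 : (euclidNum n : ℚ) ≠ 0 := by linarith
  have h3 : (euclidNum n : ℚ) ^ 2 - (euclidNum n : ℚ) ≠ 0 := by nlinarith
  rw [key n, key (n + 1)]
  have : ((euclidNum (n + 1) : ℤ) : ℚ) = (euclidNum n : ℚ) ^ 2 - (euclidNum n : ℚ) + 1 := by
    push_cast [euclidNum]; ring
  rw [this]
  field_simp [h3]
  ring
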